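/- Let E be a finite-dimensional complex inner product space, regarded also as a real inner product space via the real part of its Hermitian inner product, and let J : E → E denote multiplication by i. If V ⊆ E is a nonzero real-linear subspace with orthogonal projection P_V which has constant Kähler angle φ for some φ ∈ [0, π/2) (i.e. ‖P_V(J v)‖ = cos(φ)·‖v‖ for every v ∈ V, with cos(φ) > 0), then the real dimension of V is even. -/

import Mathlib

/-- A nonzero real-linear subspace of a finite-dimensional complex inner product space
with constant Kähler angle `φ ∈ [0, π/2)` (so `cos φ > 0`) has even real dimension. -/
theorem even_finrank_of_constant_kahler_angle_lt
    (E : Type*) [NormedAddCommGroup E] [InnerProductSpace ℂ E] [FiniteDimensional ℂ E] :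
    letI : InnerProductSpace ℝ E := InnerProductSpace.complexToReal
    ∀ (V : Submodule ℝ E) (φ : ℝ), V ≠ ⊥ → φ ∈ Set.Ico 0 (Real.pi / 2) →
      (∀ v ∈ V, ‖(V.orthogonalProjectionOnto ((Complex.I : ℂ) • v) : E)‖ = Real.cos φ * ‖v‖) →
      Even (Module.finrank ℝ V) := by
  letI : InnerProductSpace ℝ E := InnerProductSpace.complexToReal
  intro V φ hV hφ hangle
  have hc : 0 < Real.cos φ := Real.cos_pos_of_mem_Ioo ⟨by linarith [hφ.1, Real.pi_pos], hφ.2⟩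
  -- the operator T = P_V ∘ J on V
  let T : V →ₗ[ℝ] V := (V.orthogonalProjectionOnto).toLinearMap.comp
    (((LinearMap.lsmul ℂ E Complex.I).restrictScalars ℝ).comp V.subtype)
  have hT : ∀ v : V, T v = V.orthogonalProjectionOnto ((Complex.I : ℂ) • (v : E)) := fun v => rfl
  -- T is injective
  have hinj : Function.Injective T := by
    rw [← LinearMap.ker_eq_bot]
    rw [Submodule.eq_bot_iff]
    intro v hv
    have h0 : (T v : E) = 0 := by
      rw [LinearMap.mem_ker] at hv; rw [hv]; rfl
    have := hangle v v.2
    rw [← hT v, h0, norm_zero] at this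
    have : ‖(v : E)‖ = 0 := by
      have := this.symm
      rcases mul_eq_zero.1 this with h | h
      · exact absurd h (ne_of_gt hc)
      · exact h
    ext
    simpa using norm_eq_zero.1 this
  -- T is skew-symmetric
  have key : ∀ (x : E) (w : V),
      (inner ℝ ((V.orthogonalProjectionOnto x : E)) (w : E) : ℝ) = inner ℝ x (w : E) := by
    intro x w
    have h := V.starProjection_inner_eq_zero x (w : E) w.2
    rw [inner_sub_left, sub_eq_zero] at h
    exact h.symm
  have hskew : ∀ v w : V, (inner ℝ (T v) w : ℝ) = - inner ℝ v (T w) := by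
    intro v w
    have h1 : (inner ℝ (T v) w : ℝ) = inner ℝ ((Complex.I : ℂ) • (v : E)) (w : E) := by
      rw [hT, Submodule.coe_inner, key]
    have h2 : (inner ℝ v (T w) : ℝ) = inner ℝ (v : E) ((Complex.I : ℂ) • (w : E)) := by
      rw [hT, Submodule.coe_inner, real_inner_comm, key, real_inner_comm]
    rw [h1, h2]
    have : (inner ℂ ((Complex.I : ℂ) • (v : E)) (w : E) : ℂ) = - (inner ℂ (v:E) ((Complex.I : ℂ) • (w:E)) : ℂ) := by
      rw [inner_smul_left, inner_smul_right, Complex.conj_I]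
      ring
    calc (inner ℝ ((Complex.I : ℂ) • (v : E)) (w : E) : ℝ)
        = (inner ℂ ((Complex.I : ℂ) • (v : E)) (w : E) : ℂ).re := rfl
      _ = (-(inner ℂ (v:E) ((Complex.I : ℂ) • (w:E)) : ℂ)).re := by rw [this]
      _ = - inner ℝ (v : E) ((Complex.I : ℂ) • (w : E)) := by rw [Complex.neg_re]; rfl
  -- determinant argument
  by_contra hodd
  rw [Nat.not_even_iff_odd] at hodd
  let b := stdOrthonormalBasis ℝ V
  let A := LinearMap.toMatrix b.toBasis b.toBasis T
  have hAT : A.transpose = -A := by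
    ext i j
    have : A i j = inner ℝ (b i) (T (b j)) := by
      simp [A, LinearMap.toMatrix_apply, OrthonormalBasis.coe_toBasis,
        OrthonormalBasis.repr_apply_apply]
    have h2 : A j i = inner ℝ (b j) (T (b i)) := by
      simp [A, LinearMap.toMatrix_apply, OrthonormalBasis.coe_toBasis,
        OrthonormalBasis.repr_apply_apply]
    rw [Matrix.transpose_apply, Matrix.neg_apply, this, h2]
    have h3 := hskew (b i) (b j)
    have h4 := real_inner_comm ((b : Fin _ → V) j) (T ((b : Fin _ → V) i))
    linarith
  have hdet : A.det = 0 := by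
    have h1 : A.det = A.transpose.det := (Matrix.det_transpose A).symm
    rw [hAT, Matrix.det_neg, Fintype.card_fin] at h1
    rw [Odd.neg_one_pow hodd] at h1
    linarith
  have : LinearMap.det T = 0 := by
    rw [← LinearMap.det_toMatrix b.toBasis, hdet]
  have := LinearMap.bot_lt_ker_of_det_eq_zero this
  rw [LinearMap.ker_eq_bot.2 hinj] at this
  exact lt_irrefl _ this
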